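/- A symmetric monoidal category in which all joint morphisms split is cartesian: let C be a symmetric monoidal category with unit I, and suppose (i) every object X carries morphisms δ_X : X ⟶ X ⊗ X and ε_X : X ⟶ I forming a cocommutative comonoid (coassociative, counital, cocommutative), and this structure is uniform, i.e. δ_{X⊗Y} = (δ_X ⊗ δ_Y) ≫ (𝟙_X ⊗ swap_{X,Y} ⊗ 𝟙_Y) (up to associators), ε_{X⊗Y} = (ε_X ⊗ ε_Y) ≫ (unitor), δ_I and ε_I are the coherence isomorphisms; (ii) every morphism f : X ⟶ I equals ε_X; and (iii) every morphism f : X ⟶ Y₁ ⊗ Y₂ factors as f = δ_X ≫ (f₁ ⊗ f₂) for some f₁ : X ⟶ Y₁ and f₂ : X ⟶ Y₂. Then C is cartesian monoidal: I is a terminal object, and for all objects Y₁, Y₂, the cone on the pair (Y₁, Y₂) with apex Y₁ ⊗ Y₂ and projections (𝟙_{Y₁} ⊗ ε_{Y₂}) ≫ (right unitor) and (ε_{Y₁} ⊗ 𝟙_{Y₂}) ≫ (left unitor) is a binary product (a limit cone). -/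

import Mathlib

open CategoryTheory MonoidalCategory Limits

/-- A symmetric monoidal category in which every object carries a uniform
cocommutative comonoid structure, every morphism into the unit is the counit,
and every joint morphism splits, is cartesian monoidal: the unit is terminal
and the tensor product is a binary product. -/
theorem cartesian_of_splitting
    {C : Type*} [Category C] [MonoidalCategory C] [SymmetricCategory C]
    (δ : ∀ X : C, X ⟶ X ⊗ X) (ε : ∀ X : C, X ⟶ 𝟙_ C)
    (coassoc : ∀ X : C, δ X ≫ (δ X ⊗ₘ 𝟙 X) ≫ (α_ X X X).hom = δ X ≫ (𝟙 X ⊗ₘ δ X))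
    (counit_left : ∀ X : C, δ X ≫ (ε X ⊗ₘ 𝟙 X) ≫ (λ_ X).hom = 𝟙 X)
    (counit_right : ∀ X : C, δ X ≫ (𝟙 X ⊗ₘ ε X) ≫ (ρ_ X).hom = 𝟙 X)
    (cocomm : ∀ X : C, δ X ≫ (β_ X X).hom = δ X)
    (uniform_δ : ∀ X Y : C, δ (X ⊗ Y) = (δ X ⊗ₘ δ Y) ≫ tensorμ X X Y Y)
    (uniform_ε : ∀ X Y : C, ε (X ⊗ Y) = (ε X ⊗ₘ ε Y) ≫ (λ_ (𝟙_ C)).hom)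
    (δ_unit : δ (𝟙_ C) = (λ_ (𝟙_ C)).inv)
    (ε_unit : ε (𝟙_ C) = 𝟙 (𝟙_ C))
    (discard_unique : ∀ (X : C) (f : X ⟶ 𝟙_ C), f = ε X)
    (split : ∀ (X Y₁ Y₂ : C) (f : X ⟶ Y₁ ⊗ Y₂),
      ∃ (f₁ : X ⟶ Y₁) (f₂ : X ⟶ Y₂), f = δ X ≫ (f₁ ⊗ₘ f₂)) :
    Nonempty (IsTerminal (𝟙_ C)) ∧
    ∀ Y₁ Y₂ : C,
      Nonempty (IsLimit (BinaryFan.mk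
        ((𝟙 Y₁ ⊗ₘ ε Y₂) ≫ (ρ_ Y₁).hom)
        ((ε Y₁ ⊗ₘ 𝟙 Y₂) ≫ (λ_ Y₂).hom))) := by
  have keyR : ∀ {X Y₁ Y₂ : C} (f₁ : X ⟶ Y₁) (f₂ : X ⟶ Y₂),
      δ X ≫ (f₁ ⊗ₘ f₂) ≫ (𝟙 Y₁ ⊗ₘ ε Y₂) ≫ (ρ_ Y₁).hom = f₁ := by
    intro X Y₁ Y₂ f₁ f₂
    have h : f₂ ≫ ε Y₂ = ε X := (discard_unique X _).symm ▸ rfl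
    have cr := counit_right X
    simp only [id_tensorHom, tensorHom_id, MonoidalCategory.tensorHom_def,
      MonoidalCategory.whiskerLeft_id, MonoidalCategory.id_whiskerRight,
      Category.id_comp] at cr ⊢
    rw [Category.assoc, ← MonoidalCategory.whiskerLeft_comp_assoc, h,
      ← whisker_exchange_assoc, rightUnitor_naturality, ← Category.assoc,
      ← Category.assoc, Category.assoc (δ X), cr]
    simp
  have keyL : ∀ {X Y₁ Y₂ : C} (f₁ : X ⟶ Y₁) (f₂ : X ⟶ Y₂),
      δ X ≫ (f₁ ⊗ₘ f₂) ≫ (ε Y₁ ⊗ₘ 𝟙 Y₂) ≫ (λ_ Y₂).hom = f₂ := by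
    intro X Y₁ Y₂ f₁ f₂
    have h : f₁ ≫ ε Y₁ = ε X := (discard_unique X _).symm ▸ rfl
    have cl := counit_left X
    simp only [id_tensorHom, tensorHom_id, tensorHom_def',
      MonoidalCategory.whiskerLeft_id, MonoidalCategory.id_whiskerRight,
      Category.id_comp] at cl ⊢
    rw [Category.assoc, ← comp_whiskerRight_assoc, h,
      whisker_exchange_assoc, leftUnitor_naturality, ← Category.assoc,
      ← Category.assoc, Category.assoc (δ X), cl]
    simp
  refine ⟨⟨IsTerminal.ofUniqueHom (fun X => ε X) fun X f => discard_unique X f⟩,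
    fun Y₁ Y₂ => ⟨BinaryFan.isLimitMk
      (fun s => δ s.pt ≫ (s.fst ⊗ₘ s.snd))
      (fun s => by simpa using keyR s.fst s.snd)
      (fun s => by simpa using keyL s.fst s.snd)
      (fun s m h1 h2 => ?_)⟩⟩
  obtain ⟨f₁, f₂, hm⟩ := split _ _ _ m
  have e1 : m ≫ ((𝟙 Y₁ ⊗ₘ ε Y₂) ≫ (ρ_ Y₁).hom) = f₁ := by rw [hm]; simpa using keyR f₁ f₂
  have e2 : m ≫ ((ε Y₁ ⊗ₘ 𝟙 Y₂) ≫ (λ_ Y₂).hom) = f₂ := by rw [hm]; simpa using keyL f₁ f₂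
  simp only [hm, ← e1.symm.trans h1, ← e2.symm.trans h2]
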